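/- Let L be a frame and C a lattice congruence on L. Define C̃ ⊆ L × L to be the set of pairs (a,b) for which there exist an ordinal γ and a monotone function x from the ordinals ≤ γ to L such that x(0) ≤ a ⊓ b, a ⊔ b ≤ x(γ), (x(α), x(α+1)) ∈ C for every α < γ, and x(β) = ⨆_{α < β} x(α) for every limit ordinal β ≤ γ. Then C̃ is a frame congruence on L and C ⊆ C̃. -/

import Mathlib

universe u

/-- A lattice congruence on a frame `L`: an equivalence relation closed under
binary meets and binary joins (pointwise). -/
def IsLatticeCongruence {L : Type u} [Order.Frame L] (C : Set (L × L)) : Prop :=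
  Equivalence (fun a b : L => (a, b) ∈ C) ∧
    ∀ p q : L × L, p ∈ C → q ∈ C →
      (p.1 ⊓ q.1, p.2 ⊓ q.2) ∈ C ∧ (p.1 ⊔ q.1, p.2 ⊔ q.2) ∈ C

/-- A frame congruence on a frame `L`: an equivalence relation closed under
binary meets and arbitrary joins (pointwise). -/
def IsFrameCongruence {L : Type u} [Order.Frame L] (C : Set (L × L)) : Prop :=
  Equivalence (fun a b : L => (a, b) ∈ C) ∧
    (∀ p q : L × L, p ∈ C → q ∈ C → (p.1 ⊓ q.1, p.2 ⊓ q.2) ∈ C) ∧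
    ∀ S : Set (L × L), S ⊆ C → (sSup (Prod.fst '' S), sSup (Prod.snd '' S)) ∈ C

/-- The relation `C̃`: pairs connected by a transfinite increasing `C`-chain. -/
def chainRel {L : Type u} [Order.Frame L] (C : Set (L × L)) : Set (L × L) :=
  {p | ∃ (γ : Ordinal.{u}) (x : Ordinal.{u} → L),
        MonotoneOn x (Set.Iic γ) ∧
        x 0 ≤ p.1 ⊓ p.2 ∧
        p.1 ⊔ p.2 ≤ x γ ∧
        (∀ α < γ, (x α, x (α + 1)) ∈ C) ∧
        (∀ β ≤ γ, Order.IsSuccLimit β → x β = ⨆ α : Set.Iio β, x α)}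

section Aux

open Ordinal Set

variable {L : Type u} [Order.Frame L] {C : Set (L × L)}

/-- A transfinite `C`-chain of length `γ`. -/
def IsCChain (C : Set (L × L)) (γ : Ordinal.{u}) (x : Ordinal.{u} → L) : Prop :=
  MonotoneOn x (Set.Iic γ) ∧
    (∀ α < γ, (x α, x (α + 1)) ∈ C) ∧
    (∀ β ≤ γ, Order.IsSuccLimit β → x β = ⨆ α : Set.Iio β, x α)

/-- `v` can be reached from `u` by a transfinite `C`-chain. -/
def Reach (C : Set (L × L)) (u v : L) : Prop :=
  ∃ γ x, IsCChain C γ x ∧ x 0 ≤ u ∧ v ≤ x γ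

theorem mem_chainRel_iff {a b : L} :
    (a, b) ∈ chainRel C ↔ Reach C (a ⊓ b) (a ⊔ b) := by
  constructor
  · rintro ⟨γ, x, h1, h2, h3, h4, h5⟩
    exact ⟨γ, x, ⟨h1, h4, h5⟩, h2, h3⟩
  · rintro ⟨γ, x, ⟨h1, h4, h5⟩, h2, h3⟩
    exact ⟨γ, x, h1, h2, h3, h4, h5⟩

theorem reach_refl (u : L) : Reach C u u := by
  refine ⟨0, fun _ => u, ⟨monotoneOn_const, ?_, ?_⟩, le_rfl, le_rfl⟩
  · intro α hα; exact absurd hα ((not_lt_zero (a := α)))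
  · intro β hβ hl
    exact absurd (nonpos_iff_eq_zero.mp hβ) hl.pos.ne'

theorem reach_mono {u v u' v' : L} (h : Reach C u v) (h1 : u ≤ u') (h2 : v' ≤ v) :
    Reach C u' v' := by
  obtain ⟨γ, x, hch, h0, hγ⟩ := h
  exact ⟨γ, x, hch, h0.trans h1, h2.trans hγ⟩

theorem reach_inf (hC : IsLatticeCongruence C) {u v : L} (h : Reach C u v) (c : L) :
    Reach C (u ⊓ c) (v ⊓ c) := by
  obtain ⟨γ, x, ⟨hm, hs, hl⟩, h0, hγ⟩ := h
  refine ⟨γ, fun α => x α ⊓ c, ⟨?_, ?_, ?_⟩, inf_le_inf_right c h0, inf_le_inf_right c hγ⟩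
  · intro p hp q hq hpq
    exact inf_le_inf_right c (hm hp hq hpq)
  · intro α hα
    exact (hC.2 _ _ (hs α hα) (hC.1.refl c)).1
  · intro β hβ hlim
    show x β ⊓ c = ⨆ α : Set.Iio β, x ↑α ⊓ c
    rw [hl β hβ hlim, iSup_inf_eq]

theorem reach_sup (hC : IsLatticeCongruence C) {u v : L} (h : Reach C u v) (c : L) :
    Reach C (u ⊔ c) (v ⊔ c) := by
  obtain ⟨γ, x, ⟨hm, hs, hl⟩, h0, hγ⟩ := h
  refine ⟨γ, fun α => x α ⊔ c, ⟨?_, ?_, ?_⟩, sup_le_sup_right h0 c, sup_le_sup_right hγ c⟩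
  · intro p hp q hq hpq
    exact sup_le_sup_right (hm hp hq hpq) c
  · intro α hα
    exact (hC.2 _ _ (hs α hα) (hC.1.refl c)).2
  · intro β hβ hlim
    haveI : Nonempty (Set.Iio β) := ⟨⟨0, hlim.pos⟩⟩
    show x β ⊔ c = ⨆ α : Set.Iio β, x ↑α ⊔ c
    rw [hl β hβ hlim, iSup_sup]

theorem reach_of_mem (hC : IsLatticeCongruence C) {a b : L} (h : (a, b) ∈ C) :
    Reach C (a ⊓ b) (a ⊔ b) := by
  have hrb : (b, b) ∈ C := hC.1.refl b
  have h1 : (a ⊓ b, b) ∈ C := by simpa using (hC.2 (a, b) (b, b) h hrb).1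
  have h2 : (a ⊔ b, b) ∈ C := by simpa using (hC.2 (a, b) (b, b) h hrb).2
  have hstep : (a ⊓ b, a ⊔ b) ∈ C := hC.1.trans h1 (hC.1.symm h2)
  refine ⟨1, fun α => if α = 0 then a ⊓ b else a ⊔ b, ⟨?_, ?_, ?_⟩, by simp, by simp⟩
  · intro p _ q _ hpq
    by_cases hp : p = 0
    · simp only [hp, if_pos rfl]
      by_cases hq : q = 0 <;> simp [hq, inf_le_sup]
    · have hq : q ≠ 0 := by
        intro h0
        exact hp (le_antisymm (h0 ▸ hpq) (zero_le (a := p)))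
      simp [hp, hq]
  · intro α hα
    have : α = 0 := Ordinal.lt_one_iff_zero.mp hα
    subst this
    simpa using hstep
  · intro β hβ hlim
    exact absurd (Ordinal.one_lt_of_isSuccLimit hlim) (not_lt.mpr hβ)

theorem reach_trans (hC : IsLatticeCongruence C) {u v w : L}
    (h1 : Reach C u v) (h2 : Reach C v w) : Reach C u w := by
  obtain ⟨γ₁, x, ⟨hxm, hxs, hxl⟩, hx0, hxγ⟩ := h1
  obtain ⟨γ₂, y, ⟨hym, hys, hyl⟩, hy0, hyγ⟩ := h2
  have hy0T : y 0 ≤ x γ₁ := hy0.trans hxγ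
  set z : Ordinal.{u} → L := fun α => if α ≤ γ₁ then x α else y (α - γ₁) ⊔ x γ₁ with hzdef
  have hzx : ∀ α ≤ γ₁, z α = x α := fun α h => if_pos h
  have hzy : ∀ α, γ₁ ≤ α → z α = y (α - γ₁) ⊔ x γ₁ := by
    intro α h
    rcases eq_or_lt_of_le h with rfl | h'
    · rw [hzx _ le_rfl, Ordinal.sub_self]
      exact (sup_eq_right.mpr hy0T).symm
    · exact if_neg (not_le.mpr h')
  have hsub_mem : ∀ α, α ≤ γ₁ + γ₂ → α - γ₁ ≤ γ₂ := fun α h => Ordinal.sub_le.mpr h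
  have hzm : MonotoneOn z (Set.Iic (γ₁ + γ₂)) := by
    intro p hp q hq hpq
    rcases le_or_gt q γ₁ with h | h
    · rw [hzx p (hpq.trans h), hzx q h]
      exact hxm (Set.mem_Iic.mpr (hpq.trans h)) (Set.mem_Iic.mpr h) hpq
    rcases le_or_gt p γ₁ with h' | h'
    · rw [hzx p h', hzy q h.le]
      exact le_trans (hxm (Set.mem_Iic.mpr h') (Set.mem_Iic.mpr le_rfl) h') le_sup_right
    · rw [hzy p h'.le, hzy q h.le]
      refine sup_le_sup_right (hym ?_ ?_ ?_) _
      · exact Set.mem_Iic.mpr (hsub_mem p (Set.mem_Iic.mp hp))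
      · exact Set.mem_Iic.mpr (hsub_mem q (Set.mem_Iic.mp hq))
      · refine Ordinal.sub_le.mpr ?_
        rw [Ordinal.add_sub_cancel_of_le h.le]
        exact hpq
  have hzs : ∀ α < γ₁ + γ₂, (z α, z (α + 1)) ∈ C := by
    intro α hα
    rcases lt_or_ge α γ₁ with h | h
    · have hsucc : α + 1 ≤ γ₁ := by
        rw [Ordinal.add_one_eq_succ]; exact Order.succ_le_of_lt h
      rw [hzx α h.le, hzx (α + 1) hsucc]
      exact hxs α h
    · have h1 : (α + 1) - γ₁ = (α - γ₁) + 1 := by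
        conv_lhs => rw [← Ordinal.add_sub_cancel_of_le h, add_assoc]
        rw [Ordinal.add_sub_cancel]
      rw [hzy α h, hzy (α + 1) (h.trans (le_self_add (a := α) (b := 1))), h1]
      have hstep := hys (α - γ₁) ((Ordinal.sub_lt_of_le h).mpr hα)
      exact (hC.2 _ _ hstep (hC.1.refl (x γ₁))).2
  have hzl : ∀ β ≤ γ₁ + γ₂, Order.IsSuccLimit β → z β = ⨆ α : Set.Iio β, z α := by
    intro β hβ hl
    haveI : Nonempty (Set.Iio β) := ⟨⟨0, hl.pos⟩⟩
    rcases le_or_gt β γ₁ with h | h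
    · rw [hzx β h, hxl β h hl]
      exact iSup_congr fun α => (hzx ↑α (α.2.le.trans h)).symm
    · have hδ0 : γ₁ ≤ β := h.le
      have hδne : β - γ₁ ≠ 0 := by
        rw [Ne, Ordinal.sub_eq_zero_iff_le]; exact not_le.mpr h
      have hδlim : Order.IsSuccLimit (β - γ₁) := by
        rcases Ordinal.zero_or_succ_or_isSuccLimit (β - γ₁) with h0 | ⟨ε, hε⟩ | hlim
        · exact absurd h0 hδne
        · exfalso
          have hβeq : β = Order.succ (γ₁ + ε) := by
            rw [← Ordinal.add_sub_cancel_of_le hδ0, ← hε, Ordinal.add_succ]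
          have h2 : γ₁ + ε < β := hβeq ▸ Order.lt_succ (γ₁ + ε)
          have h3 := hl.succ_lt h2
          rw [← hβeq] at h3
          exact lt_irrefl _ h3
        · exact hlim
      rw [hzy β hδ0]
      apply le_antisymm
      · rw [hyl (β - γ₁) (hsub_mem β hβ) hδlim]
        haveI : Nonempty (Set.Iio (β - γ₁)) := ⟨⟨0, hδlim.pos⟩⟩
        rw [iSup_sup]
        refine iSup_le fun ε => ?_
        have hεβ : γ₁ + ↑ε < β := by
          conv_rhs => rw [← Ordinal.add_sub_cancel_of_le hδ0]
          exact (add_lt_add_iff_left γ₁).mpr ε.2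
        refine le_trans (le_of_eq ?_) (le_iSup (fun α : Set.Iio β => z ↑α) ⟨γ₁ + ↑ε, hεβ⟩)
        rw [hzy (γ₁ + ↑ε) (le_self_add), Ordinal.add_sub_cancel]
      · refine iSup_le fun α => ?_
        have h1 : z ↑α ≤ z β :=
          hzm (Set.mem_Iic.mpr (le_of_lt (lt_of_lt_of_le α.2 hβ))) (Set.mem_Iic.mpr hβ) α.2.le
        rw [hzy β hδ0] at h1
        exact h1
  refine ⟨γ₁ + γ₂, z, ⟨hzm, hzs, hzl⟩, ?_, ?_⟩
  · rw [hzx 0 (zero_le (a := γ₁))]; exact hx0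
  · rw [hzy (γ₁ + γ₂) (le_self_add), Ordinal.add_sub_cancel]
    exact le_trans hyγ le_sup_left

theorem reach_iSup (hC : IsLatticeCongruence C) {ι : Type u} (A : L) (b : ι → L)
    (h : ∀ i, Reach C A (A ⊔ b i)) : Reach C A (A ⊔ ⨆ i, b i) := by
  rcases isEmpty_or_nonempty ι with hempty | hne
  · rw [iSup_of_empty, sup_bot_eq]
    exact reach_refl A
  choose γ x hch hbot htop using h
  set Γ : Ordinal.{u} := (⨆ i, γ i) + Ordinal.omega0.{u} with hΓdef
  have hΓlim : Order.IsSuccLimit Γ := Ordinal.isSuccLimit_add _ Ordinal.isSuccLimit_omega0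
  have hΓ0 : Γ ≠ 0 := hΓlim.pos.ne'
  have hγΓ : ∀ i, γ i ≤ Γ := fun i =>
    le_trans (Ordinal.le_iSup γ i) (le_self_add)
  set y : ι → Ordinal.{u} → L := fun i α => x i (min α (γ i)) ⊔ A with hydef
  have hy0 : ∀ i, y i 0 = A := by
    intro i
    simp only [hydef]
    rw [min_eq_left zero_le]
    exact sup_eq_right.mpr (hbot i)
  have hymono : ∀ i, Monotone (y i) := fun i p q hpq =>
    sup_le_sup_right ((hch i).1 (Set.mem_Iic.mpr (min_le_right _ _))
      (Set.mem_Iic.mpr (min_le_right _ _)) (min_le_min hpq le_rfl)) _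
  have hytop : ∀ i, A ⊔ b i ≤ y i Γ := by
    intro i
    simp only [hydef]
    rw [min_eq_right (hγΓ i)]
    exact le_sup_of_le_left (htop i)
  have hysteps : ∀ i α, (y i α, y i (α + 1)) ∈ C := by
    intro i α
    rcases lt_or_ge α (γ i) with h | h
    · have h1 : min α (γ i) = α := min_eq_left h.le
      have h2 : min (α + 1) (γ i) = α + 1 :=
        min_eq_left (by rw [Ordinal.add_one_eq_succ]; exact Order.succ_le_of_lt h)
      simp only [hydef]
      rw [h1, h2]
      exact (hC.2 _ _ ((hch i).2.1 α h) (hC.1.refl A)).2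
    · have h1 : min α (γ i) = γ i := min_eq_right h
      have h2 : min (α + 1) (γ i) = γ i := min_eq_right (h.trans (le_self_add))
      simp only [hydef]
      rw [h1, h2]
      exact hC.1.refl _
  have hylim : ∀ i β, Order.IsSuccLimit β → y i β = ⨆ α : Set.Iio β, y i ↑α := by
    intro i β hl
    haveI : Nonempty (Set.Iio β) := ⟨⟨0, hl.pos⟩⟩
    rcases le_or_gt β (γ i) with h | h
    · simp only [hydef]
      rw [min_eq_left h, (hch i).2.2 β h hl, iSup_sup]
      exact iSup_congr fun α => by rw [min_eq_left (α.2.le.trans h)]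
    · apply le_antisymm
      · have he : y i β = y i (γ i) := by
          simp only [hydef]; rw [min_eq_right h.le, min_self]
        rw [he]
        exact le_iSup (fun α : Set.Iio β => y i ↑α) ⟨γ i, h⟩
      · exact iSup_le fun α => hymono i α.2.le
  let r : ι → ι → Prop := WellOrderingRel
  haveI : IsWellOrder ι r := WellOrderingRel.isWellOrder
  haveI : Inhabited ι := Classical.inhabited_of_nonempty hne
  set o : Ordinal.{u} := Ordinal.type r with hodef
  set f : Ordinal.{u} → ι := fun q => if hq : q < o then Ordinal.enum r ⟨q, hq⟩ else default
    with hfdef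
  set z : Ordinal.{u} → L :=
    fun α => y (f (α / Γ)) (α % Γ) ⊔ ⨆ q : Set.Iio (α / Γ), y (f ↑q) Γ with hzdef
  have hdm : ∀ q r', r' < Γ → (Γ * q + r') / Γ = q ∧ (Γ * q + r') % Γ = r' := by
    intro q r' hr
    constructor
    · rw [Ordinal.mul_add_div _ hΓ0, Ordinal.div_eq_zero_of_lt hr, add_zero]
    · rw [Ordinal.mul_add_mod_self, Ordinal.mod_eq_of_lt hr]
  have hzval : ∀ q r', r' < Γ →
      z (Γ * q + r') = y (f q) r' ⊔ ⨆ q' : Set.Iio q, y (f ↑q') Γ := by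
    intro q r' hr
    simp only [hzdef]
    rw [(hdm q r' hr).1, (hdm q r' hr).2]
  have hzmono : Monotone z := by
    intro p q hpq
    have hd : p / Γ ≤ q / Γ := Ordinal.div_le_left hpq Γ
    rcases eq_or_lt_of_le hd with he | hlt
    · have hm : p % Γ ≤ q % Γ := by
        have h1 := Ordinal.div_add_mod p Γ
        have h2 := Ordinal.div_add_mod q Γ
        rw [← h1, ← h2, he] at hpq
        exact (add_le_add_iff_left _).mp hpq
      simp only [hzdef]
      rw [he]
      exact sup_le_sup_right (hymono _ hm) _
    · simp only [hzdef]
      refine le_trans (sup_le ?_ ?_) le_sup_right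
      · exact le_trans (hymono _ (Ordinal.mod_lt p hΓ0).le)
          (le_iSup (fun q' : Set.Iio (q / Γ) => y (f ↑q') Γ) ⟨p / Γ, hlt⟩)
      · exact iSup_le fun q' =>
          le_iSup (fun q'' : Set.Iio (q / Γ) => y (f ↑q'') Γ) ⟨↑q', lt_trans q'.2 hlt⟩
  have hz0 : z 0 = A := by
    haveI : IsEmpty (Set.Iio (0 : Ordinal.{u})) := ⟨fun α => (not_lt_zero (a := (α : Ordinal.{u}))) α.2⟩
    simp only [hzdef]
    rw [Ordinal.zero_div, Ordinal.zero_mod, iSup_of_empty, sup_bot_eq, hy0]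
  have hzsteps : ∀ α, (z α, z (α + 1)) ∈ C := by
    intro α
    obtain ⟨q, r', hr, rfl⟩ : ∃ q r', r' < Γ ∧ Γ * q + r' = α :=
      ⟨α / Γ, α % Γ, Ordinal.mod_lt α hΓ0, Ordinal.div_add_mod α Γ⟩
    have hr1 : r' + 1 < Γ := by
      rw [Ordinal.add_one_eq_succ]; exact hΓlim.succ_lt hr
    have e1 : Γ * q + r' + 1 = Γ * q + (r' + 1) := by rw [add_assoc]
    rw [hzval q r' hr, e1, hzval q (r' + 1) hr1]
    exact (hC.2 _ _ (hysteps (f q) r') (hC.1.refl _)).2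
  have hzlim : ∀ β, Order.IsSuccLimit β → z β = ⨆ α : Set.Iio β, z ↑α := by
    intro β hl
    obtain ⟨q, r', hr, hdecomp⟩ : ∃ q r', r' < Γ ∧ Γ * q + r' = β :=
      ⟨β / Γ, β % Γ, Ordinal.mod_lt β hΓ0, Ordinal.div_add_mod β Γ⟩
    apply le_antisymm ?_ (iSup_le fun α => hzmono α.2.le)
    rcases eq_or_ne r' 0 with rfl | hr0
    · rw [add_zero] at hdecomp
      subst hdecomp
      have hv := hzval q 0 hΓlim.pos
      rw [add_zero] at hv
      rw [hv]
      refine sup_le ?_ (iSup_le fun q' => ?_)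
      · rw [hy0]
        exact le_trans (le_of_eq hz0.symm)
          (le_iSup (fun α : Set.Iio (Γ * q) => z ↑α) ⟨0, hl.pos⟩)
      · rw [hylim (f ↑q') Γ hΓlim]
        refine iSup_le fun ε => ?_
        have hidx : Γ * ↑q' + ↑ε < Γ * q := by
          calc Γ * ↑q' + ↑ε < Γ * ↑q' + Γ := (add_lt_add_iff_left _).mpr ε.2
            _ = Γ * Order.succ ↑q' := (Ordinal.mul_succ _ _).symm
            _ ≤ Γ * q := mul_le_mul_right (Order.succ_le_of_lt q'.2) Γ
        refine le_trans ?_ (le_iSup (fun α : Set.Iio (Γ * q) => z ↑α) ⟨Γ * ↑q' + ↑ε, hidx⟩)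
        rw [hzval ↑q' ↑ε ε.2]
        exact le_sup_left
    · have hrlim : Order.IsSuccLimit r' := by
        rcases Ordinal.zero_or_succ_or_isSuccLimit r' with h0 | ⟨ε, hε⟩ | hlim
        · exact absurd h0 hr0
        · exfalso
          rw [← hdecomp, ← hε, Ordinal.add_succ] at hl
          rcases Ordinal.zero_or_succ_or_isSuccLimit (Order.succ (Γ * q + ε)) with hh | hh | hh
          · exact (Order.succ_ne_bot _) hh
          · exact absurd hl (by
              intro hcontra
              have := hcontra.succ_lt (Order.lt_succ (Γ * q + ε))
              exact lt_irrefl _ this)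
          · exact absurd hl (by
              intro hcontra
              have := hcontra.succ_lt (Order.lt_succ (Γ * q + ε))
              exact lt_irrefl _ this)
        · exact hlim
      subst hdecomp
      rw [hzval q r' hr]
      refine sup_le ?_ ?_
      · rw [hylim (f q) r' hrlim]
        refine iSup_le fun ε => ?_
        have hidx : Γ * q + ↑ε < Γ * q + r' := (add_lt_add_iff_left _).mpr ε.2
        refine le_trans ?_
          (le_iSup (fun α : Set.Iio (Γ * q + r') => z ↑α) ⟨Γ * q + ↑ε, hidx⟩)
        rw [hzval q ↑ε (lt_trans ε.2 hr)]
        exact le_sup_left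
      · have hidx : Γ * q < Γ * q + r' := by
          have h1 := (add_lt_add_iff_left (Γ * q)).mpr (pos_iff_ne_zero.mpr hr0)
          simpa using h1
        refine le_trans ?_ (le_iSup (fun α : Set.Iio (Γ * q + r') => z ↑α) ⟨Γ * q, hidx⟩)
        have hv := hzval q 0 hΓlim.pos
        rw [add_zero] at hv
        rw [hv]
        exact le_sup_right
  have hztop : A ⊔ (⨆ i, b i) ≤ z (Γ * o) := by
    have hv := hzval o 0 hΓlim.pos
    rw [add_zero] at hv
    rw [hv, hy0]
    refine sup_le le_sup_left (le_trans (iSup_le fun i => ?_) le_sup_right)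
    have hq : Ordinal.typein r i < o := Ordinal.typein_lt_type r i
    have hfq : f (Ordinal.typein r i) = i := by
      rw [hfdef]
      simp only
      rw [dif_pos hq]
      exact Ordinal.enum_typein r i
    refine le_trans ?_ (le_iSup (fun q' : Set.Iio o => y (f ↑q') Γ) ⟨Ordinal.typein r i, hq⟩)
    simp only [hfq]
    exact le_trans le_sup_right (hytop i)
  exact ⟨Γ * o, z, ⟨hzmono.monotoneOn _, fun α _ => hzsteps α, fun β _ hl => hzlim β hl⟩,
    le_of_eq hz0, hztop⟩

theorem chainRel_symm' {a b : L} (h : (a, b) ∈ chainRel C) : (b, a) ∈ chainRel C := by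
  rw [mem_chainRel_iff] at h ⊢
  exact reach_mono h (inf_comm a b).le (sup_comm b a).le

theorem chainRel_trans' (hC : IsLatticeCongruence C) {a b c : L}
    (h1 : (a, b) ∈ chainRel C) (h2 : (b, c) ∈ chainRel C) : (a, c) ∈ chainRel C := by
  rw [mem_chainRel_iff] at h1 h2 ⊢
  have r1 : Reach C (a ⊓ b ⊓ c) (a ⊓ b) := by
    refine reach_mono (reach_inf hC h2 (a ⊓ b)) ?_ ?_
    · exact le_inf inf_le_right (inf_le_left.trans inf_le_right)
    · exact le_inf (inf_le_right.trans le_sup_left) le_rfl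
  have r3 : Reach C (a ⊔ b) (a ⊔ b ⊔ c) := by
    refine reach_mono (reach_sup hC h2 (a ⊔ b)) ?_ ?_
    · exact sup_le (inf_le_left.trans le_sup_right) le_rfl
    · exact sup_le le_sup_right (le_sup_of_le_left le_sup_right)
  have rfinal : Reach C (a ⊓ b ⊓ c) (a ⊔ b ⊔ c) :=
    reach_trans hC (reach_trans hC r1 h1) r3
  refine reach_mono rfinal ?_ ?_
  · exact le_inf (inf_le_left.trans inf_le_left) inf_le_right
  · exact sup_le (le_sup_of_le_left le_sup_left) le_sup_right

theorem chainRel_inf_right (hC : IsLatticeCongruence C) {a b : L}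
    (h : (a, b) ∈ chainRel C) (c : L) : (a ⊓ c, b ⊓ c) ∈ chainRel C := by
  rw [mem_chainRel_iff] at h ⊢
  refine reach_mono (reach_inf hC h c) ?_ ?_
  · exact le_inf (inf_le_inf_right c inf_le_left) (inf_le_inf_right c inf_le_right)
  · exact sup_le (inf_le_inf_right c le_sup_left) (inf_le_inf_right c le_sup_right)

theorem chainRel_sSup_aux (hC : IsLatticeCongruence C) {S : Set (L × L)}
    (hS : S ⊆ chainRel C) :
    (sSup (Prod.fst '' S), sSup (Prod.fst '' S) ⊔ sSup (Prod.snd '' S)) ∈ chainRel C := by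
  set A := sSup (Prod.fst '' S) with hAdef
  rw [mem_chainRel_iff]
  have hB : sSup (Prod.snd '' S) = ⨆ p : S, (p : L × L).2 := sSup_image'
  have key : Reach C A (A ⊔ ⨆ p : S, (p : L × L).2) := by
    refine reach_iSup hC A _ fun p => ?_
    obtain ⟨⟨a', b'⟩, hmem⟩ := p
    have hp : Reach C (a' ⊓ b') (a' ⊔ b') := mem_chainRel_iff.mp (hS hmem)
    have ha : a' ≤ A := le_sSup ⟨(a', b'), hmem, rfl⟩
    refine reach_mono (reach_sup hC hp A) ?_ ?_
    · exact sup_le (inf_le_left.trans ha) le_rfl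
    · exact sup_le le_sup_right (le_sup_of_le_left le_sup_right)
  rw [hB]
  exact reach_mono key (le_inf le_rfl le_sup_left) (sup_le le_sup_left le_rfl)

end Aux

/-- For a lattice congruence `C`, the relation `C̃` is a frame congruence
containing `C`. -/
theorem chainRel_isFrameCongruence {L : Type u} [Order.Frame L]
    (C : Set (L × L)) (hC : IsLatticeCongruence C) :
    IsFrameCongruence (chainRel C) ∧ C ⊆ chainRel C := by
  have hrefl : ∀ a : L, (a, a) ∈ chainRel C := fun a => by
    rw [mem_chainRel_iff, inf_idem, sup_idem]
    exact reach_refl a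
  constructor
  · refine ⟨⟨fun a => hrefl a, fun h => chainRel_symm' h,
      fun h1 h2 => chainRel_trans' hC h1 h2⟩, ?_, ?_⟩
    · rintro ⟨a, b⟩ ⟨c, d⟩ h1 h2
      dsimp only
      have m1 : (a ⊓ c, b ⊓ c) ∈ chainRel C := chainRel_inf_right hC h1 c
      have m2 : (c ⊓ b, d ⊓ b) ∈ chainRel C := chainRel_inf_right hC h2 b
      rw [inf_comm c b, inf_comm d b] at m2
      exact chainRel_trans' hC m1 m2
    · intro S hSsub
      have h1 := chainRel_sSup_aux hC hSsub
      have hswap : Prod.swap '' S ⊆ chainRel C := by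
        rintro p ⟨q, hq, rfl⟩
        exact chainRel_symm' (hSsub hq)
      have h2 := chainRel_sSup_aux hC hswap
      have e1 : Prod.fst '' (Prod.swap '' S) = Prod.snd '' S := by
        rw [Set.image_image]; rfl
      have e2 : Prod.snd '' (Prod.swap '' S) = Prod.fst '' S := by
        rw [Set.image_image]; rfl
      rw [e1, e2, sup_comm] at h2
      exact chainRel_trans' hC h1 (chainRel_symm' h2)
  · intro p hp
    have h : (p.1, p.2) ∈ chainRel C :=
      mem_chainRel_iff.mpr (reach_of_mem hC (by simpa using hp))
    simpa using h
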